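/- Let $\mathfrak{q}_{n-1} \subset \mathfrak{gl}_n(\mathbb{R})$ be spanned by $\{e_{ij} : 1 \le i \le n-1,\ 1 \le j \le n\}$. Then $\mathfrak{q}_{n-1}$ is a Lie subalgebra of $\mathfrak{gl}_n(\mathbb{R})$, and the restriction to $\mathfrak{q}_{n-1}$ of the 2-cochain $\mu = \sum_{1\le i<j\le n-1} e_{ij}^*\wedge e_{ji}^* + \sum_{i=1}^{n-1} e_{ii}^*\wedge e_{in}^*$ on $\mathfrak{gl}_n(\mathbb{R})$ is non-degenerate. -/
import Mathlib

private lemma aux11 {m : ℕ} (g : Fin m → Fin m → ℝ) (a b : Fin m) :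
    (∑ x : Fin m, ∑ y : Fin m, if x < y then
        (if a = y then if b = x then g x y else 0 else 0)
          - (if a = x then if b = y then g y x else 0 else 0) else 0)
      = (if b < a then g b a else 0) - (if a < b then g b a else 0) := by
  have h : ∀ x y : Fin m, (if x < y then (if a = y then if b = x then g x y else 0 else 0) - (if a = x then if b = y then g y x else 0 else 0) else 0)
      = (if a = y then if b = x then (if x < y then g x y else 0) else 0 else 0)
        - (if a = x then if b = y then (if x < y then g y x else 0) else 0 else 0) := by
    intro x y; split_ifs <;> simp
  simp [h, Finset.sum_sub_distrib, Finset.sum_ite_eq]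

/-- The subspace `q_{n-1} ⊂ gl_n(ℝ)` (here `n = m+1`) spanned by
`{e_{ij} : 1 ≤ i ≤ n-1, 1 ≤ j ≤ n}`, i.e. the matrices with vanishing last row. -/
def Q (m : ℕ) : Submodule ℝ (Matrix (Fin (m + 1)) (Fin (m + 1)) ℝ) where
  carrier := {A | ∀ j, A (Fin.last m) j = 0}
  add_mem' := by intro a b ha hb j; simp [Matrix.add_apply, ha j, hb j]
  zero_mem' := by intro j; simp
  smul_mem' := by intro c a ha j; simp [Matrix.smul_apply, ha j]

/-- The 2-cochain `μ = ∑_{1≤i<j≤n-1} e_{ij}*∧e_{ji}* + ∑_{i=1}^{n-1} e_{ii}*∧e_{in}*`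
on `gl_n(ℝ)`, `n = m+1`, evaluated on a pair of matrices. -/
def μ11 (m : ℕ) (X Y : Matrix (Fin (m + 1)) (Fin (m + 1)) ℝ) : ℝ :=
  (∑ i : Fin m, ∑ j : Fin m, if (i : ℕ) < (j : ℕ) then
      X i.castSucc j.castSucc * Y j.castSucc i.castSucc
        - Y i.castSucc j.castSucc * X j.castSucc i.castSucc
    else 0)
  + ∑ i : Fin m,
      (X i.castSucc i.castSucc * Y i.castSucc (Fin.last m)
        - Y i.castSucc i.castSucc * X i.castSucc (Fin.last m))

/-- `q_{n-1}` (matrices with vanishing last row) is a Lie subalgebra of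
`gl_n(ℝ)`, and the restriction to `q_{n-1}` of the 2-cochain
`μ = ∑_{1≤i<j≤n-1} e_{ij}*∧e_{ji}* + ∑_{i=1}^{n-1} e_{ii}*∧e_{in}*` is non-degenerate. -/
theorem statement11 (m : ℕ) :
    (∀ X ∈ Q m, ∀ Y ∈ Q m, ⁅X, Y⁆ ∈ Q m) ∧
    (∀ X ∈ Q m, (∀ Y ∈ Q m, μ11 m X Y = 0) → X = 0) := by
  constructor
  · intro X hX Y hY j
    simp [Ring.lie_def, Matrix.sub_apply, Matrix.mul_apply,
      show ∀ k, X (Fin.last m) k = 0 from hX, show ∀ k, Y (Fin.last m) k = 0 from hY]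
  · intro X hX h
    have mem : ∀ (a : Fin m) (q : Fin (m+1)),
        Matrix.single a.castSucc q (1:ℝ) ∈ Q m := by
      intro a q j
      have hne : a.castSucc ≠ Fin.last m := (Fin.castSucc_lt_last a).ne
      simp only [Matrix.single, Matrix.of_apply, ite_eq_right_iff, and_imp]
      intro heq
      exact absurd heq hne
    have v1 : ∀ a b : Fin m, μ11 m X (Matrix.single a.castSucc b.castSucc 1) =
        ((if b < a then X b.castSucc a.castSucc else 0)
          - (if a < b then X b.castSucc a.castSucc else 0))
        - (if a = b then X a.castSucc (Fin.last m) else 0) := by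
      intro a b
      have hb : b.castSucc ≠ Fin.last m := (Fin.castSucc_lt_last b).ne
      simp [μ11, Matrix.single, Matrix.of_apply, ite_and, mul_ite, ite_mul, hb,
        Fin.castSucc_inj, Finset.sum_ite_eq, Finset.sum_sub_distrib]
      rw [aux11 (fun x y => X x.castSucc y.castSucc) a b]
      simp [eq_comm, sub_eq_add_neg]
    have v2 : ∀ a : Fin m, μ11 m X (Matrix.single a.castSucc (Fin.last m) 1) =
        X a.castSucc a.castSucc := by
      intro a
      have hne : ∀ i : Fin m, Fin.last m ≠ i.castSucc := fun i => (Fin.castSucc_lt_last i).ne'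
      simp [μ11, Matrix.single, Matrix.of_apply, ite_and, mul_ite, ite_mul, hne,
        Fin.castSucc_inj, Finset.sum_ite_eq]
    ext i j
    simp only [Matrix.zero_apply]
    by_cases hi : i = Fin.last m
    · subst hi; exact hX j
    · obtain ⟨a, ha⟩ := Fin.exists_castSucc_eq.mpr hi
      subst ha
      by_cases hj : j = Fin.last m
      · subst hj
        have := h _ (mem a a.castSucc)
        rw [v1 a a] at this
        simpa using this
      · obtain ⟨b, hb⟩ := Fin.exists_castSucc_eq.mpr hj
        subst hb
        rcases eq_or_ne a b with rfl | hab
        · have := h _ (mem a (Fin.last m))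
          rwa [v2 a] at this
        · have := h _ (mem b a.castSucc)
          rw [v1 b a] at this
          rcases hab.lt_or_gt with hlt | hlt <;>
            simp [hlt, hlt.not_gt, hab, hab.symm] at this <;> exact this
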